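/- arXiv:1404.5224 — 2 statements merged into one kernel-verified Lean document; each statement's English description precedes it below -/
import Mathlib

section
/- Let k ≥ 1, q ∈ ℚ and n ≥ 1. Let M⁺ₙ(q) be the n×n Hessenberg matrix over ℚ[t₁,…,t_k] with entries (M⁺ₙ)_{i,j} = (1/i)·((i−j+1)q + (j−1))·t_{i−j+1} for 1 ≤ j ≤ i (in particular (M⁺ₙ)_{i,1} = q·t_i), (M⁺ₙ)_{i,i+1} = +1, and all other entries 0. Then perm M⁺ₙ(q) = F^q_{k,n}, where the permanent of an n×n matrix (a_{i,j}) is Σ_{σ ∈ Sₙ} Π_{i=1}^n a_{i,σ(i)}. -/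
open Finset MvPolynomial

/-- The set of partitions `α ⊢ n` with parts at most `k`, encoded as tuples
`α = (α₁, …, α_k) ∈ ℕ^k` (0-indexed) with `∑ j, (j+1)·α_j = n`. -/
def partitions (k n : ℕ) : Finset (Fin k → ℕ) :=
  (Fintype.piFinset fun _ : Fin k => Finset.range (n + 1)).filter
    fun α => ∑ j : Fin k, (j.1 + 1) * α j = n

/-- The variable `t_{m+1}` of `ℚ[t₁,…,t_k]` (0-indexed), with the convention
`t_j = 0` for `j > k`. -/
noncomputable def tQ (k m : ℕ) : MvPolynomial (Fin k) ℚ :=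
  if h : m < k then X ⟨m, h⟩ else 0

/-- The Stirling operator of the first kind: `B q m = q(q+1)⋯(q+m-1)`, i.e.
`B q m = B_{m-1}(q)` in the paper's notation, with `B q 0 = B_{-1}(q) = 1`. -/
def B (q : ℚ) (m : ℕ) : ℚ := ∏ i ∈ Finset.range m, (q + i)

/-- The `q`-th convolution root of the generalized Fibonacci polynomial:
`F^q_{k,n} = ∑_{α ⊢ n} (B_{|α|-1}(q) / (α₁!⋯α_k!)) · t^α`, with `F^q_{k,0} = 1`. -/
noncomputable def Fq (k : ℕ) (q : ℚ) (n : ℕ) : MvPolynomial (Fin k) ℚ :=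
  if n = 0 then 1 else
    ∑ α ∈ partitions k n,
      C (B q (∑ j, α j) / ∏ j, ((α j).factorial : ℚ)) * ∏ j, X j ^ α j

/-- The permanent of an `n×n` matrix: `∑_{σ ∈ Sₙ} ∏ᵢ a_{i,σ(i)}`. -/
noncomputable def perm {n : ℕ} {R : Type*} [CommRing R] (M : Matrix (Fin n) (Fin n) R) : R :=
  ∑ σ : Equiv.Perm (Fin n), ∏ i, M i (σ i)

/-- The `n×n` Hessenberg matrix `M⁺ₙ(q)` (0-indexed): for 1-based indices
`i, j` with `j ≤ i` the entry is `(1/i)·((i-j+1)q + (j-1))·t_{i-j+1}`,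
the superdiagonal entries are `+1`, and all other entries are `0`. -/
noncomputable def Mplus (k n : ℕ) (q : ℚ) : Matrix (Fin n) (Fin n) (MvPolynomial (Fin k) ℚ) :=
  fun i j =>
    if j.1 ≤ i.1 then
      C ((((i.1 - j.1 + 1 : ℕ) : ℚ) * q + (j.1 : ℚ)) / ((i.1 : ℚ) + 1)) * tQ k (i.1 - j.1)
    else if j.1 = i.1 + 1 then 1
    else 0


section PermAux

variable {R : Type*} [CommRing R]

lemma perm_eq_sum_comp {n : ℕ} (A : Matrix (Fin n) (Fin n) R) :
    perm A = ∑ σ : Equiv.Perm (Fin n), ∏ c, A (σ c) c := by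
  unfold perm
  refine Fintype.sum_bijective (·⁻¹) (Equiv.inv _).bijective _ _ fun σ => ?_
  exact Fintype.prod_equiv σ _ _ fun i => by simp

lemma perm_submatrix_equiv {n : ℕ} (A : Matrix (Fin n) (Fin n) R) (e f : Equiv.Perm (Fin n)) :
    perm (A.submatrix e f) = perm A := by
  unfold perm
  refine Fintype.sum_bijective (fun σ => e.symm.trans (σ.trans f))
    (Equiv.bijective ⟨fun σ => e.symm.trans (σ.trans f), fun σ => e.trans (σ.trans f.symm),
      fun σ => by ext x; simp, fun σ => by ext x; simp⟩) _ _ fun σ => ?_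
  refine Fintype.prod_equiv e _ _ fun i => ?_
  simp [Matrix.submatrix]

lemma perm_succ_column_zero {n : ℕ} (A : Matrix (Fin (n+1)) (Fin (n+1)) R) :
    perm A = ∑ i : Fin (n+1), A i 0 * perm (A.submatrix i.succAbove Fin.succ) := by
  rw [perm_eq_sum_comp, Finset.univ_perm_fin_succ, ← Finset.univ_product_univ]
  simp only [Finset.sum_map, Equiv.toEmbedding_apply, Finset.sum_product]
  refine Finset.sum_congr rfl fun i _ => Fin.cases ?_ (fun i => ?_) i
  · rw [perm_eq_sum_comp, Finset.mul_sum]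
    refine Finset.sum_congr rfl fun σ _ => ?_
    rw [Fin.prod_univ_succ]
    simp [Matrix.submatrix, Fin.succAbove_zero]
  · rw [perm_eq_sum_comp, Finset.mul_sum]
    rw [← Equiv.sum_comp (Equiv.mulLeft i.cycleRange)
      (fun τ => A i.succ 0 * ∏ c, (A.submatrix i.succ.succAbove Fin.succ) (τ c) c)]
    refine Finset.sum_congr rfl fun σ _ => ?_
    rw [Fin.prod_univ_succ]
    simp only [Equiv.Perm.decomposeFin_symm_apply_zero, Equiv.Perm.decomposeFin_symm_apply_succ,
      Matrix.submatrix_apply, Equiv.coe_mulLeft, Equiv.Perm.coe_mul, Function.comp_apply,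
      Fin.succAbove_cycleRange]

lemma perm_succ_column_last {n : ℕ} (A : Matrix (Fin (n+1)) (Fin (n+1)) R) :
    perm A = ∑ i : Fin (n+1), A i (Fin.last n) * perm (A.submatrix i.succAbove Fin.castSucc) := by
  have h1 : perm A = perm (A.submatrix Fin.revPerm Fin.revPerm) :=
    (perm_submatrix_equiv A _ _).symm
  rw [h1, perm_succ_column_zero]
  rw [← Equiv.sum_comp (Fin.revPerm)
    (fun i => A i (Fin.last n) * perm (A.submatrix i.succAbove Fin.castSucc))]
  refine Finset.sum_congr rfl fun i _ => ?_
  have e1 : (A.submatrix Fin.revPerm Fin.revPerm) i 0 = A i.rev (Fin.last n) := by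
    simp [Fin.rev_zero]
  have e2 : perm ((A.submatrix Fin.revPerm Fin.revPerm).submatrix i.succAbove Fin.succ)
      = perm (A.submatrix i.rev.succAbove Fin.castSucc) := by
    rw [← perm_submatrix_equiv (A.submatrix (Fin.rev i).succAbove Fin.castSucc)
      Fin.revPerm Fin.revPerm]
    congr 1
    ext r c
    simp [Matrix.submatrix, Fin.rev_succAbove, Fin.rev_succ]
  rw [e1, e2]; rfl

def Hess (a : ℕ → ℕ → R) (n : ℕ) : Matrix (Fin n) (Fin n) R :=
  fun i j => if j.1 ≤ i.1 then a i.1 j.1 else if j.1 = i.1 + 1 then 1 else 0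

def Gmat (a : ℕ → ℕ → R) (b : ℕ → R) (n : ℕ) : Matrix (Fin n) (Fin n) R :=
  fun i j => if i.1 = n - 1 then b j.1 else Hess a n i j

lemma perm_fin_zero (A : Matrix (Fin 0) (Fin 0) R) : perm A = 1 := by
  simp [perm]

lemma gmat_rec (a : ℕ → ℕ → R) (b : ℕ → R) (n : ℕ) (hn : 1 ≤ n) :
    perm (Gmat a b (n+1)) = b n * perm (Hess a n) + perm (Gmat a b n) := by
  rw [perm_succ_column_last]
  have key : ∀ i : Fin (n+1),
      Gmat a b (n+1) i (Fin.last n) = if i.1 = n then b n else if i.1 = n - 1 then 1 else 0 := by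
    intro i
    simp only [Gmat, Hess, Fin.val_last, Nat.add_sub_cancel]
    rcases eq_or_ne i.1 n with h | h
    · simp [h]
    · rw [if_neg h, if_neg h]
      have h2 : ¬ n ≤ i.1 := by omega
      rw [if_neg h2]
      rcases eq_or_ne i.1 (n-1) with h3 | h3
      · have h4 : n = i.1 + 1 := by omega
        rw [if_pos h4, if_pos h3]
      · have h4 : n ≠ i.1 + 1 := by omega
        rw [if_neg h4, if_neg h3]
  have hn1 : n - 1 ≠ n := by omega
  have hne : (⟨n, by omega⟩ : Fin (n+1)) ≠ ⟨n - 1, by omega⟩ := by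
    simp only [ne_eq, Fin.mk.injEq]; omega
  rw [← Finset.sum_subset (Finset.subset_univ {(⟨n, by omega⟩ : Fin (n+1)), ⟨n-1, by omega⟩})
    (fun i _ hi => by
      have h1 : i.1 ≠ n := by
        intro h; exact hi (by simp [Finset.mem_insert, Fin.ext_iff, h])
      have h2 : i.1 ≠ n - 1 := by
        intro h; exact hi (by simp [Finset.mem_insert, Fin.ext_iff, h])
      rw [key i, if_neg h1, if_neg h2, zero_mul])]
  rw [Finset.sum_pair hne, key, key]
  rw [if_pos rfl, if_neg hn1, if_pos rfl]
  congr 1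
  · congr 1
    have hlast : (⟨n, by omega⟩ : Fin (n+1)) = Fin.last n := rfl
    rw [hlast, Fin.succAbove_last]
    congr 1
    ext r c
    simp only [Matrix.submatrix_apply, Gmat, Hess, Fin.coe_castSucc, Nat.add_sub_cancel]
    have : r.1 ≠ n := by omega
    rw [if_neg this]
  · rw [one_mul]
    congr 1
    ext r c
    simp only [Matrix.submatrix_apply, Gmat, Hess, Fin.coe_castSucc, Nat.add_sub_cancel]
    rcases lt_or_ge r.1 (n-1) with h | h
    · have hs : (⟨n-1, by omega⟩ : Fin (n+1)).succAbove r = Fin.castSucc r := by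
        apply Fin.succAbove_of_castSucc_lt
        simp [Fin.lt_def, h]
      rw [hs]
      simp only [Fin.coe_castSucc]
      have h1 : r.1 ≠ n := by omega
      have h2 : r.1 ≠ n - 1 := by omega
      rw [if_neg h1, if_neg h2]
    · have hr : r.1 = n - 1 := by omega
      have hs : (⟨n-1, by omega⟩ : Fin (n+1)).succAbove r = Fin.succ r := by
        apply Fin.succAbove_of_le_castSucc
        simp [Fin.le_def, hr]
      rw [hs]
      simp only [Fin.val_succ]
      have h1 : r.1 + 1 = n := by omega
      rw [if_pos h1, if_pos hr]

lemma gmat_expand (a : ℕ → ℕ → R) (b : ℕ → R) :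
    ∀ n : ℕ, perm (Gmat a b (n+1)) = ∑ j ∈ Finset.range (n+1), b j * perm (Hess a j) := by
  intro n
  induction n with
  | zero =>
    rw [Finset.sum_range_one]
    have : perm (Hess a 0) = 1 := perm_fin_zero _
    rw [this, mul_one]
    have : Gmat a b 1 = fun _ _ => b 0 := by
      ext i j
      have hi : i.1 = 0 := by omega
      have hj : j.1 = 0 := by omega
      simp [Gmat, hi, hj]
    rw [this]
    simp [perm]
  | succ m ih =>
    rw [gmat_rec a b (m+1) (by omega), ih,
      Finset.sum_range_succ (fun j => b j * perm (Hess a j)) (m+1), add_comm]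

lemma hess_expand (a : ℕ → ℕ → R) (n : ℕ) :
    perm (Hess a (n+1)) = ∑ j ∈ Finset.range (n+1), a n j * perm (Hess a j) := by
  have hG : Hess a (n+1) = Gmat a (a n) (n+1) := by
    ext i j
    simp only [Gmat, Nat.add_sub_cancel]
    rcases eq_or_ne i.1 n with h | h
    · have hj : j.1 ≤ i.1 := by omega
      rw [if_pos h, Hess, if_pos hj, h]
    · rw [if_neg h]
  rw [hG, gmat_expand]

end PermAux

-- weight
lemma C_mul_prod_X_pow {k : ℕ} (c : ℚ) (α : Fin k → ℕ) :
    C c * ∏ j, X j ^ α j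
      = monomial (Finsupp.equivFunOnFinite.symm α) c := by
  have h1 : ∏ j, (X j : MvPolynomial (Fin k) ℚ) ^ α j
      = monomial (Finsupp.equivFunOnFinite.symm α) 1 := by
    rw [← prod_X_pow_eq_monomial]
    rw [← Finset.prod_subset (Finset.subset_univ (Finsupp.equivFunOnFinite.symm α).support)
      (fun j _ hj => by
        have : (Finsupp.equivFunOnFinite.symm α) j = 0 := by
          simpa using Finsupp.notMem_support_iff.mp hj
        change (X j : MvPolynomial (Fin k) ℚ) ^ α j = 1
        have hα : α j = 0 := this
        rw [hα, pow_zero])]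
    rfl
  rw [h1, C_mul_monomial, mul_one]

lemma coeff_Fq (k : ℕ) (q : ℚ) (n : ℕ) (d : Fin k →₀ ℕ) :
    coeff d (Fq k q n) =
      if (∑ j, (j.1 + 1) * d j) = n then B q (∑ j, d j) / ∏ j, ((d j).factorial : ℚ)
      else 0 := by
  unfold Fq
  by_cases hn : n = 0
  · subst hn
    rw [if_pos rfl, coeff_one]
    by_cases hd : d = 0
    · subst hd
      simp [B]
    · have h1 : ¬ (0 : Fin k →₀ ℕ) = d := fun h => hd h.symm
      have h2 : (∑ j, (j.1 + 1) * d j) ≠ 0 := by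
        intro h
        apply hd
        ext j
        have h3 := (Finset.sum_eq_zero_iff).mp h j (Finset.mem_univ j)
        simp only [Finsupp.coe_zero, Pi.zero_apply]
        rcases Nat.mul_eq_zero.mp h3 with h4 | h4
        · omega
        · exact h4
      rw [if_neg h1, if_neg h2]
  · rw [if_neg hn, coeff_sum]
    have h1 : ∀ α ∈ partitions k n,
        coeff d (C (B q (∑ j, α j) / ∏ j, ((α j).factorial : ℚ)) * ∏ j, X j ^ α j)
        = if α = ⇑d then B q (∑ j, α j) / ∏ j, ((α j).factorial : ℚ) else 0 := by
      intro α _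
      rw [C_mul_prod_X_pow, coeff_monomial]
      congr 1
      rw [eq_iff_iff]
      constructor
      · intro h
        have := congrArg Finsupp.equivFunOnFinite h
        have h' : α = Finsupp.equivFunOnFinite d := by simpa using this
        exact h'
      · intro h
        rw [h]
        exact Finsupp.equivFunOnFinite_symm_coe d
    rw [Finset.sum_congr rfl h1, Finset.sum_ite_eq' (partitions k n) (⇑d)
      (fun α => B q (∑ j, α j) / ∏ j, ((α j).factorial : ℚ))]
    congr 1
    rw [eq_iff_iff]
    constructor
    · intro h
      exact ((Finset.mem_filter.mp h).2)
    · intro h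
      rw [partitions, Finset.mem_filter]
      refine ⟨Fintype.mem_piFinset.mpr fun j => ?_, h⟩
      rw [Finset.mem_range]
      have h2 : (j.1 + 1) * d j ≤ n := h ▸ Finset.single_le_sum
        (f := fun j : Fin k => (j.1 + 1) * d j) (fun _ _ => Nat.zero_le _) (Finset.mem_univ j)
      have : d j ≤ (j.1 + 1) * d j := Nat.le_mul_of_pos_left _ (Nat.succ_pos _)
      omega

section subs
variable {k : ℕ}

lemma key_pointwise (d : Fin k →₀ ℕ) (i : Fin k) (hi : 1 ≤ d i) (w : Fin k → ℕ) :
    ∀ j : Fin k, w j * d j = w j * ((d - Finsupp.single i 1 : Fin k →₀ ℕ) j) + (if j = i then w i else 0) := by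
  intro j
  rw [Finsupp.tsub_apply, Finsupp.single_apply]
  by_cases h : j = i
  · subst h
    rw [if_pos rfl, if_pos rfl]
    obtain ⟨t, ht⟩ : ∃ t, d j = t + 1 := ⟨d j - 1, by omega⟩
    rw [ht]
    simp [Nat.mul_add]
  · rw [if_neg (fun hh => h hh.symm), if_neg h]
    simp

lemma wt_sub (d : Fin k →₀ ℕ) (i : Fin k) (hi : 1 ≤ d i) :
    (∑ j, (j.1 + 1) * ((d - Finsupp.single i 1 : Fin k →₀ ℕ) j)) + (i.1 + 1)
      = ∑ j, (j.1 + 1) * d j := by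
  rw [Finset.sum_congr rfl (fun j _ => key_pointwise d i hi (fun j => j.1 + 1) j),
    Finset.sum_add_distrib, Finset.sum_ite_eq' Finset.univ i (fun _ => i.1 + 1)]
  simp

lemma ssum_sub (d : Fin k →₀ ℕ) (i : Fin k) (hi : 1 ≤ d i) :
    (∑ j, ((d - Finsupp.single i 1 : Fin k →₀ ℕ) j)) + 1 = ∑ j, d j := by
  have := key_pointwise d i hi (fun _ => 1)
  simp only [one_mul] at this
  rw [Finset.sum_congr rfl (fun j _ => this j), Finset.sum_add_distrib,
    Finset.sum_ite_eq' Finset.univ i (fun _ => 1)]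
  simp

lemma fact_sub (d : Fin k →₀ ℕ) (i : Fin k) (hi : 1 ≤ d i) :
    (d i : ℚ) * ∏ j, (((d - Finsupp.single i 1 : Fin k →₀ ℕ) j).factorial : ℚ)
      = ∏ j, ((d j).factorial : ℚ) := by
  rw [← Finset.mul_prod_erase Finset.univ (fun j => (((d - Finsupp.single i 1 : Fin k →₀ ℕ) j).factorial : ℚ))
    (Finset.mem_univ i),
    ← Finset.mul_prod_erase Finset.univ (fun j => ((d j).factorial : ℚ)) (Finset.mem_univ i)]
  have h1 : ∀ j ∈ Finset.univ.erase i,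
      (((d - Finsupp.single i 1 : Fin k →₀ ℕ) j).factorial : ℚ) = ((d j).factorial : ℚ) := by
    intro j hj
    have hij : j ≠ i := Finset.ne_of_mem_erase hj
    rw [Finsupp.tsub_apply, Finsupp.single_apply, if_neg (fun hh => hij hh.symm)]
    simp
  rw [Finset.prod_congr rfl h1, ← mul_assoc]
  congr 1
  rw [Finsupp.tsub_apply, Finsupp.single_apply, if_pos rfl]
  rw [← Nat.cast_mul, Nat.mul_factorial_pred (by omega)]

lemma fact_pos (d : Fin k →₀ ℕ) : (0:ℚ) < ∏ j, ((d j).factorial : ℚ) :=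
  Finset.prod_pos fun j _ => by exact_mod_cast (d j).factorial_pos

end subs

lemma scalar_key (k n : ℕ) (q : ℚ) (d : Fin k →₀ ℕ)
    (hW : ∑ j : Fin k, (j.1 + 1) * d j = n + 1) :
    ∑ i : Fin k, (if 1 ≤ d i then
        ((((i.1 + 1 : ℕ)) : ℚ) * q + ((n - i.1 : ℕ) : ℚ)) / ((n : ℚ) + 1) *
          (B q ((∑ j, d j) - 1) /
            ∏ j, (((d - Finsupp.single i 1 : Fin k →₀ ℕ) j).factorial : ℚ))
      else 0)
    = B q (∑ j, d j) / ∏ j, ((d j).factorial : ℚ) := by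
  have hS1 : 1 ≤ ∑ j, d j := by
    by_contra h
    have hS0 : ∑ j, d j = 0 := by omega
    have hz : ∀ j ∈ Finset.univ, (j.1 + 1) * d j = 0 := fun j _ => by
      have := Finset.sum_eq_zero_iff.mp hS0 j (Finset.mem_univ j)
      simp [this]
    rw [Finset.sum_eq_zero hz] at hW
    omega
  have hF : (0:ℚ) < ∏ j, ((d j).factorial : ℚ) := fact_pos d
  have hn1 : ((n : ℚ) + 1) ≠ 0 := by positivity
  have hterm : ∀ i : Fin k, (if 1 ≤ d i then
        ((((i.1 + 1 : ℕ)) : ℚ) * q + ((n - i.1 : ℕ) : ℚ)) / ((n : ℚ) + 1) *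
          (B q ((∑ j, d j) - 1) /
            ∏ j, (((d - Finsupp.single i 1 : Fin k →₀ ℕ) j).factorial : ℚ))
      else 0)
      = ((((i.1 + 1 : ℕ)) : ℚ) * q + ((n - i.1 : ℕ) : ℚ)) * (d i : ℚ) *
          (B q ((∑ j, d j) - 1) / (((n : ℚ) + 1) * ∏ j, ((d j).factorial : ℚ))) := by
    intro i
    by_cases hd : 1 ≤ d i
    · rw [if_pos hd]
      have hfs := fact_sub d i hd
      have hFi : (0:ℚ) < ∏ j, (((d - Finsupp.single i 1 : Fin k →₀ ℕ) j).factorial : ℚ) :=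
        fact_pos _
      have hdi : (d i : ℚ) ≠ 0 := by
        have : 0 < d i := hd
        positivity
      rw [← hfs]
      field_simp
    · rw [if_neg hd]
      have h0 : d i = 0 := by omega
      rw [h0]
      simp
  rw [Finset.sum_congr rfl (fun i _ => hterm i), ← Finset.sum_mul]
  have hsum : ∑ i : Fin k, ((((i.1 + 1 : ℕ)) : ℚ) * q + ((n - i.1 : ℕ) : ℚ)) * (d i : ℚ)
      = ((n : ℚ) + 1) * (q + (∑ j, d j : ℕ) - 1) := by
    simp only [add_mul]
    rw [Finset.sum_add_distrib]
    have h1 : ∑ i : Fin k, ((i.1 + 1 : ℕ) : ℚ) * q * (d i : ℚ)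
        = q * ((∑ i : Fin k, (i.1 + 1) * d i : ℕ) : ℚ) := by
      push_cast
      rw [Finset.mul_sum]
      exact Finset.sum_congr rfl fun i _ => by ring
    have hle : ∀ i ∈ Finset.univ, (i.1 + 1) * d i ≤ (n + 1) * d i := by
      intro i _
      by_cases h : d i = 0
      · simp [h]
      · have hsl : (i.1 + 1) * d i ≤ n + 1 := hW ▸ Finset.single_le_sum
          (f := fun j : Fin k => (j.1 + 1) * d j) (fun _ _ => Nat.zero_le _) (Finset.mem_univ i)
        have h2 : i.1 + 1 ≤ n + 1 := le_trans (Nat.le_mul_of_pos_right _ (by omega)) hsl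
        exact Nat.mul_le_mul_right _ h2
    have hnat : ∑ i : Fin k, (n - i.1) * d i = (n + 1) * (∑ j, d j) - (n + 1) := by
      have h2 : ∀ i : Fin k, (n - i.1) * d i = (n + 1) * d i - (i.1 + 1) * d i := by
        intro i
        rw [← Nat.sub_mul]
        congr 1
        omega
      rw [Finset.sum_congr rfl (fun i _ => h2 i), Finset.sum_tsub_distrib _ hle,
        ← Finset.mul_sum, hW]
    have h3 : ∑ i : Fin k, ((n - i.1 : ℕ) : ℚ) * (d i : ℚ)
        = (((n + 1) * (∑ j, d j) - (n + 1) : ℕ) : ℚ) := by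
      rw [← hnat]
      push_cast
      rfl
    rw [h1, hW, h3, Nat.cast_sub (by
      calc n + 1 = (n + 1) * 1 := by ring
      _ ≤ (n + 1) * (∑ j, d j) := Nat.mul_le_mul_left _ hS1)]
    push_cast
    ring
  rw [hsum]
  have hBS : B q (∑ j, d j) = B q ((∑ j, d j) - 1) * (q + ((∑ j, d j : ℕ) : ℚ) - 1) := by
    have he : (∑ j, d j) - 1 + 1 = ∑ j, d j := by omega
    conv_lhs => rw [← he]
    rw [B, Finset.prod_range_succ, ← B]
    congr 1
    rw [Nat.cast_sub hS1]
    push_cast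
    ring
  rw [hBS]
  field_simp

lemma Fq_rec (k n : ℕ) (q : ℚ) :
    Fq k q (n + 1) = ∑ m ∈ Finset.range (n + 1),
      C ((((m + 1 : ℕ) : ℚ) * q + ((n - m : ℕ) : ℚ)) / ((n : ℚ) + 1)) *
        (tQ k m * Fq k q (n - m)) := by
  apply MvPolynomial.ext
  intro d
  rw [coeff_Fq, coeff_sum]
  have hterm : ∀ m ∈ Finset.range (n + 1),
      coeff d (C ((((m + 1 : ℕ) : ℚ) * q + ((n - m : ℕ) : ℚ)) / ((n : ℚ) + 1)) *
        (tQ k m * Fq k q (n - m)))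
      = if h : m < k then
          (if 1 ≤ d ⟨m, h⟩ then
            (if (∑ j : Fin k, (j.1 + 1) * d j) = n + 1 then
              ((((m + 1 : ℕ) : ℚ) * q + ((n - m : ℕ) : ℚ)) / ((n : ℚ) + 1)) *
                (B q ((∑ j, d j) - 1) /
                  ∏ j, (((d - Finsupp.single ⟨m, h⟩ 1 : Fin k →₀ ℕ) j).factorial : ℚ))
            else 0)
          else 0)
        else 0 := by
    intro m hm
    rw [coeff_C_mul]
    by_cases h : m < k
    · rw [dif_pos h]
      rw [tQ, dif_pos h, coeff_X_mul']
      by_cases hd : 1 ≤ d ⟨m, h⟩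
      · have hmem : (⟨m, h⟩ : Fin k) ∈ d.support := by
          rw [Finsupp.mem_support_iff]
          omega
        rw [if_pos hmem, if_pos hd, coeff_Fq]
        have hw := wt_sub d ⟨m, h⟩ hd
        have hs := ssum_sub d ⟨m, h⟩ hd
        have hmrange : m < n + 1 := Finset.mem_range.mp hm
        have hiff : ((∑ j : Fin k, (j.1 + 1) * ((d - Finsupp.single ⟨m, h⟩ 1 : Fin k →₀ ℕ) j))
            = n - m) ↔ ((∑ j : Fin k, (j.1 + 1) * d j) = n + 1) := by
          simp only [Fin.val_mk] at hw
          omega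
        rw [if_congr hiff rfl rfl]
        by_cases hww : (∑ j : Fin k, (j.1 + 1) * d j) = n + 1
        · rw [if_pos hww, if_pos hww]
          have hs' : (∑ j, ((d - Finsupp.single ⟨m, h⟩ 1 : Fin k →₀ ℕ) j)) = (∑ j, d j) - 1 := by
            omega
          rw [hs']
        · rw [if_neg hww, if_neg hww, mul_zero]
      · have hmem : (⟨m, h⟩ : Fin k) ∉ d.support := by
          rw [Finsupp.mem_support_iff]
          omega
        rw [if_neg hmem, if_neg hd, mul_zero]
    · rw [dif_neg h, tQ, dif_neg h, zero_mul, coeff_zero, mul_zero]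
  rw [Finset.sum_congr rfl hterm]
  by_cases hW : (∑ j : Fin k, (j.1 + 1) * d j) = n + 1
  · rw [if_pos hW]
    have hstep : ∀ m, (if h : m < k then
          (if 1 ≤ d ⟨m, h⟩ then
            (if (∑ j : Fin k, (j.1 + 1) * d j) = n + 1 then
              ((((m + 1 : ℕ) : ℚ) * q + ((n - m : ℕ) : ℚ)) / ((n : ℚ) + 1)) *
                (B q ((∑ j, d j) - 1) /
                  ∏ j, (((d - Finsupp.single ⟨m, h⟩ 1 : Fin k →₀ ℕ) j).factorial : ℚ))
            else 0)
          else 0)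
        else 0)
        = (if h : m < k then
          (if 1 ≤ d ⟨m, h⟩ then
              ((((m + 1 : ℕ) : ℚ) * q + ((n - m : ℕ) : ℚ)) / ((n : ℚ) + 1)) *
                (B q ((∑ j, d j) - 1) /
                  ∏ j, (((d - Finsupp.single ⟨m, h⟩ 1 : Fin k →₀ ℕ) j).factorial : ℚ))
          else 0)
        else 0) := by
      intro m
      by_cases h : m < k
      · rw [dif_pos h, dif_pos h, if_pos hW]
      · rw [dif_neg h, dif_neg h]
    rw [Finset.sum_congr rfl (fun m _ => hstep m)]
    -- extend the range sum and convert to a sum over Fin k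
    have hzero_big : ∀ m, n + 1 ≤ m → (if h : m < k then
          (if 1 ≤ d ⟨m, h⟩ then
              ((((m + 1 : ℕ) : ℚ) * q + ((n - m : ℕ) : ℚ)) / ((n : ℚ) + 1)) *
                (B q ((∑ j, d j) - 1) /
                  ∏ j, (((d - Finsupp.single ⟨m, h⟩ 1 : Fin k →₀ ℕ) j).factorial : ℚ))
          else 0)
        else 0) = 0 := by
      intro m hm
      by_cases h : m < k
      · rw [dif_pos h]
        have hd0 : ¬ 1 ≤ d ⟨m, h⟩ := by
          intro hd
          have hsl : (m + 1) * d ⟨m, h⟩ ≤ n + 1 := hW ▸ Finset.single_le_sum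
            (f := fun j : Fin k => (j.1 + 1) * d j) (fun _ _ => Nat.zero_le _)
            (Finset.mem_univ ⟨m, h⟩)
          have : m + 1 ≤ (m + 1) * d ⟨m, h⟩ := Nat.le_mul_of_pos_right _ (by omega)
          omega
        rw [if_neg hd0]
      · rw [dif_neg h]
    have hext : ∑ m ∈ Finset.range (n + 1), (if h : m < k then
          (if 1 ≤ d ⟨m, h⟩ then
              ((((m + 1 : ℕ) : ℚ) * q + ((n - m : ℕ) : ℚ)) / ((n : ℚ) + 1)) *
                (B q ((∑ j, d j) - 1) /
                  ∏ j, (((d - Finsupp.single ⟨m, h⟩ 1 : Fin k →₀ ℕ) j).factorial : ℚ))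
          else 0)
        else 0)
        = ∑ m ∈ Finset.range (max (n + 1) k), (if h : m < k then
          (if 1 ≤ d ⟨m, h⟩ then
              ((((m + 1 : ℕ) : ℚ) * q + ((n - m : ℕ) : ℚ)) / ((n : ℚ) + 1)) *
                (B q ((∑ j, d j) - 1) /
                  ∏ j, (((d - Finsupp.single ⟨m, h⟩ 1 : Fin k →₀ ℕ) j).factorial : ℚ))
          else 0)
        else 0) := by
      apply Finset.sum_subset
      · apply Finset.range_subset_range.mpr
        omega
      · intro m _ hm
        exact hzero_big m (by
          have := Finset.mem_range.not.mp hm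
          omega)
    have hext2 : ∑ m ∈ Finset.range k, (if h : m < k then
          (if 1 ≤ d ⟨m, h⟩ then
              ((((m + 1 : ℕ) : ℚ) * q + ((n - m : ℕ) : ℚ)) / ((n : ℚ) + 1)) *
                (B q ((∑ j, d j) - 1) /
                  ∏ j, (((d - Finsupp.single ⟨m, h⟩ 1 : Fin k →₀ ℕ) j).factorial : ℚ))
          else 0)
        else 0)
        = ∑ m ∈ Finset.range (max (n + 1) k), (if h : m < k then
          (if 1 ≤ d ⟨m, h⟩ then
              ((((m + 1 : ℕ) : ℚ) * q + ((n - m : ℕ) : ℚ)) / ((n : ℚ) + 1)) *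
                (B q ((∑ j, d j) - 1) /
                  ∏ j, (((d - Finsupp.single ⟨m, h⟩ 1 : Fin k →₀ ℕ) j).factorial : ℚ))
          else 0)
        else 0) := by
      apply Finset.sum_subset
      · apply Finset.range_subset_range.mpr
        omega
      · intro m _ hm
        have hmk : ¬ m < k := by
          have := Finset.mem_range.not.mp hm
          omega
        rw [dif_neg hmk]
    rw [hext, ← hext2]
    have hfin : ∑ m ∈ Finset.range k, (if h : m < k then
          (if 1 ≤ d ⟨m, h⟩ then
              ((((m + 1 : ℕ) : ℚ) * q + ((n - m : ℕ) : ℚ)) / ((n : ℚ) + 1)) *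
                (B q ((∑ j, d j) - 1) /
                  ∏ j, (((d - Finsupp.single ⟨m, h⟩ 1 : Fin k →₀ ℕ) j).factorial : ℚ))
          else 0)
        else 0)
        = ∑ i : Fin k, (if 1 ≤ d i then
            ((((i.1 + 1 : ℕ)) : ℚ) * q + ((n - i.1 : ℕ) : ℚ)) / ((n : ℚ) + 1) *
              (B q ((∑ j, d j) - 1) /
                ∏ j, (((d - Finsupp.single i 1 : Fin k →₀ ℕ) j).factorial : ℚ))
          else 0) := by
      rw [← Fin.sum_univ_eq_sum_range]
      apply Finset.sum_congr rfl
      intro i _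
      rw [dif_pos i.2]
    rw [hfin, scalar_key k n q d hW]
  · rw [if_neg hW]
    symm
    apply Finset.sum_eq_zero
    intro m _
    by_cases h : m < k
    · rw [dif_pos h]
      by_cases hd : 1 ≤ d ⟨m, h⟩
      · rw [if_pos hd, if_neg hW]
      · rw [if_neg hd]
    · rw [dif_neg h]


noncomputable def aQ (k : ℕ) (q : ℚ) (i j : ℕ) : MvPolynomial (Fin k) ℚ :=
  C ((((i - j + 1 : ℕ) : ℚ) * q + (j : ℚ)) / ((i : ℚ) + 1)) * tQ k (i - j)

lemma sum_aQ (k n : ℕ) (q : ℚ) (f : ℕ → MvPolynomial (Fin k) ℚ) :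
    ∑ j ∈ Finset.range (n + 1), aQ k q n j * f j
      = ∑ m ∈ Finset.range (n + 1),
          C ((((m + 1 : ℕ) : ℚ) * q + ((n - m : ℕ) : ℚ)) / ((n : ℚ) + 1)) *
            (tQ k m * f (n - m)) := by
  rw [← Finset.sum_range_reflect (fun j => aQ k q n j * f j) (n + 1)]
  apply Finset.sum_congr rfl
  intro m hm
  have hm' : m ≤ n := by
    have := Finset.mem_range.mp hm
    omega
  have h1 : n + 1 - 1 - m = n - m := by omega
  have h2 : n - (n - m) = m := by omega
  simp only [h1]
  rw [aQ, h2, mul_assoc]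

theorem perm_Mplus_eq_Fq (k n : ℕ) (hk : 1 ≤ k) (hn : 1 ≤ n) (q : ℚ) :
    perm (Mplus k n q) = Fq k q n := by
  have main : ∀ m : ℕ, perm (Mplus k m q) = Fq k q m := by
    intro m
    induction m using Nat.strong_induction_on with
    | _ m ih =>
      cases m with
      | zero =>
        rw [perm_fin_zero, Fq, if_pos rfl]
      | succ n =>
        have h1 : Mplus k (n + 1) q = Hess (aQ k q) (n + 1) := rfl
        rw [h1, hess_expand]
        have h2 : ∀ j ∈ Finset.range (n + 1),
            aQ k q n j * perm (Hess (aQ k q) j) = aQ k q n j * Fq k q j := by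
          intro j hj
          have hj' : j < n + 1 := Finset.mem_range.mp hj
          have h3 : Hess (aQ k q) j = Mplus k j q := rfl
          rw [h3, ih j hj']
        rw [Finset.sum_congr rfl h2, sum_aQ, ← Fq_rec]
  exact main n
end

section
/- Let k ≥ 1, q ∈ ℚ and n ≥ 1. Then F^q_{k,n} satisfies the recursive formula F^q_{k,n} = s₁·F^q_{k,n−1} + s₂·F^q_{k,n−2} + ⋯ + s_{n−1}·F^q_{k,1} + s_n·F^q_{k,0}, where the recursion parameters are s_j = (1/n)·(j·q + n − j)·t_j for 1 ≤ j ≤ n (so in particular s_n = q·t_n). -/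
open Finset MvPolynomial

lemma mem_partitions {k m : ℕ} {α : Fin k → ℕ} :
    α ∈ partitions k m ↔ ∑ j : Fin k, (j.1 + 1) * α j = m := by
  unfold partitions
  simp only [mem_filter, Fintype.mem_piFinset, mem_range, and_iff_right_iff_imp]
  intro h j
  have h1 : (j.1 + 1) * α j ≤ m := h ▸ Finset.single_le_sum
    (f := fun j : Fin k => (j.1 + 1) * α j) (fun _ _ => Nat.zero_le _) (mem_univ j)
  have h2 : α j ≤ (j.1 + 1) * α j := Nat.le_mul_of_pos_left _ (Nat.succ_pos _)
  omega

lemma partitions_zero (k : ℕ) : partitions k 0 = {fun _ => 0} := by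
  ext α
  simp only [mem_partitions, Finset.mem_singleton, Finset.sum_eq_zero_iff, mem_univ,
    true_implies, funext_iff]
  constructor
  · intro h j; have := h j; simpa using this
  · intro h j; rw [h j]; ring

lemma Fq_eq (k : ℕ) (q : ℚ) (n : ℕ) :
    Fq k q n = ∑ α ∈ partitions k n,
      C (B q (∑ j, α j) / ∏ j, ((α j).factorial : ℚ)) * ∏ j, X j ^ α j := by
  rcases Nat.eq_zero_or_pos n with h | h
  · subst h
    rw [Fq, if_pos rfl, partitions_zero, Finset.sum_singleton]
    simp [B]
  · rw [Fq, if_neg h.ne']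

/-- `δ i α` subtracts 1 from component `i`. -/
def del {k : ℕ} (i : Fin k) (α : Fin k → ℕ) : Fin k → ℕ :=
  fun l => α l - if l = i then 1 else 0

def adde {k : ℕ} (i : Fin k) (β : Fin k → ℕ) : Fin k → ℕ :=
  fun l => β l + if l = i then 1 else 0

lemma del_adde {k : ℕ} (i : Fin k) (β : Fin k → ℕ) : del i (adde i β) = β := by
  funext l; simp only [del, adde]; split <;> omega

lemma adde_del {k : ℕ} (i : Fin k) (α : Fin k → ℕ) (h : 1 ≤ α i) :
    adde i (del i α) = α := by
  funext l; simp only [del, adde]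
  split
  · next he => subst he; omega
  · omega

lemma wsum_adde {k : ℕ} (i : Fin k) (β : Fin k → ℕ) :
    ∑ l : Fin k, (l.1 + 1) * adde i β l = (∑ l : Fin k, (l.1 + 1) * β l) + (i.1 + 1) := by
  simp only [adde, mul_add, Finset.sum_add_distrib, mul_ite, mul_one, mul_zero,
    Finset.sum_ite_eq', mem_univ, if_true]

lemma sum_adde {k : ℕ} (i : Fin k) (β : Fin k → ℕ) :
    ∑ l : Fin k, adde i β l = (∑ l : Fin k, β l) + 1 := by
  simp only [adde, Finset.sum_add_distrib, Finset.sum_ite_eq', mem_univ, if_true]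

lemma prod_fact_del {k : ℕ} (i : Fin k) (α : Fin k → ℕ) (h : 1 ≤ α i) :
    (∏ l, ((del i α l).factorial : ℚ)) * (α i : ℚ) = ∏ l, ((α l).factorial : ℚ) := by
  have hN : (∏ l, (del i α l).factorial) * α i = ∏ l, (α l).factorial := by
    rw [Finset.prod_eq_prod_diff_singleton_mul (mem_univ i),
      Finset.prod_eq_prod_diff_singleton_mul (mem_univ i) (fun l => (α l).factorial)]
    have hoff : ∀ l ∈ univ \ {i}, (del i α l).factorial = (α l).factorial := by
      intro l hl
      simp only [mem_sdiff, Finset.mem_singleton] at hl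
      simp [del, hl.2]
    rw [Finset.prod_congr rfl hoff, mul_assoc]
    congr 1
    have : del i α i = α i - 1 := by simp [del]
    rw [this, mul_comm, Nat.mul_factorial_pred (n := α i) (by omega)]
  exact_mod_cast congrArg (Nat.cast : ℕ → ℚ) hN

lemma prod_X_del {k : ℕ} (i : Fin k) (α : Fin k → ℕ) (h : 1 ≤ α i) :
    (X i : MvPolynomial (Fin k) ℚ) * ∏ l, X l ^ del i α l = ∏ l, X l ^ α l := by
  have hα : ∀ l, α l = del i α l + (if l = i then 1 else 0) := by
    intro l
    conv_lhs => rw [← adde_del i α h]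
    rfl
  rw [Finset.prod_congr rfl (fun l (_ : l ∈ univ) => by rw [hα l, pow_add] :
    ∀ l ∈ univ, (X l : MvPolynomial (Fin k) ℚ) ^ α l
      = X l ^ del i α l * X l ^ (if l = i then 1 else 0)), Finset.prod_mul_distrib]
  have : ∏ l : Fin k, (X l : MvPolynomial (Fin k) ℚ) ^ (if l = i then 1 else 0) = X i := by
    simp only [pow_ite, pow_one, pow_zero]
    rw [Finset.prod_ite_eq' univ i (fun l => (X l : MvPolynomial (Fin k) ℚ))]
    simp
  rw [this, mul_comm]

lemma scalar_key_s2 {k n : ℕ} (q : ℚ) (hn : 1 ≤ n) (α : Fin k → ℕ)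
    (hα : ∑ l : Fin k, (l.1 + 1) * α l = n) :
    ∑ i ∈ univ.filter (fun i : Fin k => 1 ≤ α i),
      (((i.1 + 1 : ℚ) * q + (n : ℚ) - (i.1 + 1 : ℚ)) / (n : ℚ)) *
        (B q (∑ l, del i α l) / ∏ l, ((del i α l).factorial : ℚ))
      = B q (∑ l, α l) / ∏ l, ((α l).factorial : ℚ) := by
  set S := ∑ l, α l with hSdef
  have hn0 : (n : ℚ) ≠ 0 := by positivity
  have hfact : (∏ l, ((α l).factorial : ℚ)) ≠ 0 :=
    Finset.prod_ne_zero_iff.2 fun l _ => by positivity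
  have hS : 1 ≤ S := by
    by_contra hc
    push_neg at hc
    interval_cases S
    · have hz : ∀ l, α l = 0 := by
        intro l
        have := Finset.sum_eq_zero_iff.1 hSdef.symm l (mem_univ l)
        exact this
      rw [Finset.sum_congr rfl (fun l _ => by rw [hz l, mul_zero])] at hα
      simp at hα; omega
  -- rewrite each term
  have hterm : ∀ i ∈ univ.filter (fun i : Fin k => 1 ≤ α i),
      (((i.1 + 1 : ℚ) * q + (n : ℚ) - (i.1 + 1 : ℚ)) / (n : ℚ)) *
        (B q (∑ l, del i α l) / ∏ l, ((del i α l).factorial : ℚ))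
      = (((i.1 + 1 : ℚ) * q + (n : ℚ) - (i.1 + 1 : ℚ)) * (α i : ℚ)) *
          (B q (S - 1) / ((n : ℚ) * ∏ l, ((α l).factorial : ℚ))) := by
    intro i hi
    simp only [mem_filter, mem_univ, true_and] at hi
    have hdsum : ∑ l, del i α l = S - 1 := by
      have := sum_adde i (del i α)
      rw [adde_del i α hi] at this
      omega
    have hpf := prod_fact_del i α hi
    have hpf0 : (∏ l, ((del i α l).factorial : ℚ)) ≠ 0 :=
      Finset.prod_ne_zero_iff.2 fun l _ => by positivity
    have hαi : (α i : ℚ) ≠ 0 := by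
      have : 0 < α i := hi
      positivity
    rw [hdsum]
    field_simp
    ring_nf
    rw [← hpf]
    ring
  rw [Finset.sum_congr rfl hterm, ← Finset.sum_mul]
  -- extend to univ
  have hext : ∑ i ∈ univ.filter (fun i : Fin k => 1 ≤ α i),
      (((i.1 + 1 : ℚ) * q + (n : ℚ) - (i.1 + 1 : ℚ)) * (α i : ℚ))
      = ∑ i : Fin k, (((i.1 + 1 : ℚ) * q + (n : ℚ) - (i.1 + 1 : ℚ)) * (α i : ℚ)) := by
    apply Finset.sum_subset (Finset.filter_subset _ _)
    intro i _ hi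
    simp only [mem_filter, mem_univ, true_and, not_le, Nat.lt_one_iff] at hi
    rw [hi]; simp
  rw [hext]
  have h1 : ∑ i : Fin k, ((i.1 + 1 : ℚ) * (α i : ℚ)) = (n : ℚ) := by
    rw [← hα]; push_cast; ring
  have h2 : ∑ i : Fin k, ((α i : ℚ)) = (S : ℚ) := by
    rw [hSdef]; push_cast; ring
  have hsum : ∑ i : Fin k, (((i.1 + 1 : ℚ) * q + (n : ℚ) - (i.1 + 1 : ℚ)) * (α i : ℚ))
      = (q - 1) * (n : ℚ) + (n : ℚ) * (S : ℚ) := by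
    have : ∀ i : Fin k, (((i.1 + 1 : ℚ) * q + (n : ℚ) - (i.1 + 1 : ℚ)) * (α i : ℚ))
        = (q - 1) * ((i.1 + 1 : ℚ) * (α i : ℚ)) + (n : ℚ) * (α i : ℚ) := fun i => by ring
    rw [Finset.sum_congr rfl (fun i _ => this i), Finset.sum_add_distrib,
      ← Finset.mul_sum, ← Finset.mul_sum, h1, h2]
  rw [hsum]
  have hBS : B q S = B q (S - 1) * (q + ((S - 1 : ℕ) : ℚ)) := by
    conv_lhs => rw [show S = (S - 1) + 1 by omega]
    rw [B, B, Finset.prod_range_succ]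
  have hcast : ((S - 1 : ℕ) : ℚ) = (S : ℚ) - 1 := by
    have : (1 : ℕ) ≤ S := hS
    push_cast [this]; ring
  rw [hBS, hcast]
  field_simp
  ring

lemma le_of_part {k n : ℕ} {α : Fin k → ℕ} (h : ∑ l : Fin k, (l.1 + 1) * α l = n)
    {i : Fin k} (hi : 1 ≤ α i) : i.1 + 1 ≤ n := by
  have h1 : (i.1 + 1) * α i ≤ n := h ▸ Finset.single_le_sum
    (f := fun l : Fin k => (l.1 + 1) * α l) (fun _ _ => Nat.zero_le _) (mem_univ i)
  have h2 : i.1 + 1 ≤ (i.1 + 1) * α i := Nat.le_mul_of_pos_right _ hi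
  omega

theorem Fq_recursion (k n : ℕ) (hk : 1 ≤ k) (hn : 1 ≤ n) (q : ℚ) :
    Fq k q n = ∑ j ∈ Finset.Icc 1 n,
      C (((j : ℚ) * q + (n : ℚ) - (j : ℚ)) / (n : ℚ)) * tQ k (j - 1) * Fq k q (n - j) := by
  simp only [Fq_eq, Finset.mul_sum]
  symm
  calc ∑ j ∈ Finset.Icc 1 n, ∑ β ∈ partitions k (n - j),
        C (((j : ℚ) * q + (n : ℚ) - (j : ℚ)) / (n : ℚ)) * tQ k (j - 1) *
          (C (B q (∑ l, β l) / ∏ l, ((β l).factorial : ℚ)) * ∏ l, X l ^ β l)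
      = ∑ j ∈ (Finset.Icc 1 n).filter (· ≤ k), ∑ β ∈ partitions k (n - j),
        C (((j : ℚ) * q + (n : ℚ) - (j : ℚ)) / (n : ℚ)) * tQ k (j - 1) *
          (C (B q (∑ l, β l) / ∏ l, ((β l).factorial : ℚ)) * ∏ l, X l ^ β l) := by
        refine (Finset.sum_subset (Finset.filter_subset _ _) ?_).symm
        intro j hj hjf
        have hjk : ¬ j ≤ k := by
          simp only [Finset.mem_filter] at hjf
          exact fun h => hjf ⟨hj, h⟩
        have ht : tQ k (j - 1) = 0 := dif_neg (by omega)
        simp [ht]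
    _ = ∑ i ∈ univ.filter (fun i : Fin k => i.1 + 1 ≤ n),
          ∑ β ∈ partitions k (n - (i.1 + 1)),
        C (((((i.1 + 1 : ℕ) : ℚ)) * q + (n : ℚ) - (((i.1 + 1 : ℕ) : ℚ))) / (n : ℚ)) * X i *
          (C (B q (∑ l, β l) / ∏ l, ((β l).factorial : ℚ)) * ∏ l, X l ^ β l) := by
        refine Finset.sum_nbij' (i := fun j => (⟨min (j - 1) (k - 1), by omega⟩ : Fin k))
          (j := fun i : Fin k => i.1 + 1) ?_ ?_ ?_ ?_ ?_
        · intro j hj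
          simp only [Finset.mem_filter, Finset.mem_Icc, mem_univ, true_and] at hj ⊢
          omega
        · intro i hi
          simp only [Finset.mem_filter, Finset.mem_Icc, mem_univ, true_and] at hi ⊢
          have := i.isLt
          omega
        · intro j hj
          simp only [Finset.mem_filter, Finset.mem_Icc] at hj
          simp only []
          omega
        · intro i hi
          simp only [Finset.mem_filter, mem_univ, true_and] at hi
          have := i.isLt
          exact Fin.ext (by simp; omega)
        · intro j hj
          simp only [Finset.mem_filter, Finset.mem_Icc] at hj
          have ht : tQ k (j - 1) = X (⟨min (j - 1) (k - 1), by omega⟩ : Fin k) := by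
            rw [tQ, dif_pos (show j - 1 < k by omega)]
            exact congrArg X (Fin.ext (by simp; omega))
          have h1 : min (j - 1) (k - 1) + 1 = j := by omega
          rw [ht]
          simp only [h1]
    _ = ∑ i ∈ univ.filter (fun i : Fin k => i.1 + 1 ≤ n),
          ∑ α ∈ (partitions k n).filter (fun α => 1 ≤ α i),
        C (((((i.1 + 1 : ℕ) : ℚ)) * q + (n : ℚ) - (((i.1 + 1 : ℕ) : ℚ))) / (n : ℚ)) * X i *
          (C (B q (∑ l, del i α l) / ∏ l, ((del i α l).factorial : ℚ)) * ∏ l, X l ^ del i α l) := by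
        refine Finset.sum_congr rfl fun i hi => ?_
        simp only [Finset.mem_filter, mem_univ, true_and] at hi
        refine Finset.sum_nbij' (i := adde i) (j := del i) ?_ ?_ ?_ ?_ ?_
        · intro β hβ
          have hβ' := mem_partitions.1 hβ
          simp only [Finset.mem_filter]
          refine ⟨mem_partitions.2 ?_, by simp [adde]⟩
          rw [wsum_adde, hβ']
          omega
        · intro α hα
          simp only [Finset.mem_filter] at hα
          obtain ⟨hp, h1⟩ := hα
          have hp' := mem_partitions.1 hp
          have hw := wsum_adde i (del i α)
          rw [adde_del i α h1] at hw
          exact mem_partitions.2 (by omega)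
        · intro β _
          exact del_adde i β
        · intro α hα
          simp only [Finset.mem_filter] at hα
          exact adde_del i α hα.2
        · intro β _
          rw [del_adde]
    _ = ∑ α ∈ partitions k n, ∑ i ∈ univ.filter (fun i : Fin k => 1 ≤ α i),
        C (((((i.1 + 1 : ℕ) : ℚ)) * q + (n : ℚ) - (((i.1 + 1 : ℕ) : ℚ))) / (n : ℚ)) * X i *
          (C (B q (∑ l, del i α l) / ∏ l, ((del i α l).factorial : ℚ)) * ∏ l, X l ^ del i α l) := by
        refine Finset.sum_comm' ?_
        intro i α
        simp only [Finset.mem_filter, mem_univ, true_and]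
        constructor
        · rintro ⟨h1, h2, h3⟩; exact ⟨h3, h2⟩
        · rintro ⟨h1, h2⟩
          exact ⟨le_of_part (mem_partitions.1 h2) h1, h2, h1⟩
    _ = ∑ α ∈ partitions k n,
        C (B q (∑ l, α l) / ∏ l, ((α l).factorial : ℚ)) * ∏ l, X l ^ α l := by
        refine Finset.sum_congr rfl fun α hα => ?_
        have hαn := mem_partitions.1 hα
        rw [← scalar_key_s2 q hn α hαn, map_sum, Finset.sum_mul]
        refine Finset.sum_congr rfl fun i hi => ?_
        simp only [Finset.mem_filter, mem_univ, true_and] at hi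
        rw [← prod_X_del i α hi, map_mul]
        push_cast
        ring
end
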